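/- Let 1 < p < ∞ and r > 0, and let f : (0,∞) → [0,∞) be measurable. Then (∫_0^∞ (∫_0^x f(y) dy)^p x^{-r-1} dx)^{1/p} ≤ (p/r) (∫_0^∞ (y f(y))^p y^{-r-1} dy)^{1/p}. -/

import Mathlib

open MeasureTheory Set
open scoped ENNReal

lemma lintA {a : ℝ} (ha : -1 < a) {x : ℝ} (hx : 0 < x) :
    ∫⁻ y in Set.Ioc (0:ℝ) x, ENNReal.ofReal (y ^ a) = ENNReal.ofReal (x ^ (a+1) / (a+1)) := by
  have hint : IntegrableOn (fun y : ℝ => y ^ a) (Set.Ioc 0 x) := by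
    have := (intervalIntegral.intervalIntegrable_rpow' ha (a := 0) (b := x)).1
    simpa using this
  rw [← ofReal_integral_eq_lintegral_ofReal hint]
  · congr 1
    rw [← intervalIntegral.integral_of_le hx.le, integral_rpow (Or.inl ha),
      Real.zero_rpow (by linarith)]
    ring
  · filter_upwards [ae_restrict_mem measurableSet_Ioc] with y hy
    exact Real.rpow_nonneg hy.1.le a

lemma lintB {b : ℝ} (hb : b < -1) {y : ℝ} (hy : 0 < y) :
    ∫⁻ x in Set.Ioi y, ENNReal.ofReal (x ^ b) = ENNReal.ofReal (y ^ (b+1) / (-(b+1))) := by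
  rw [← ofReal_integral_eq_lintegral_ofReal (integrableOn_Ioi_rpow_of_lt hb hy)]
  · rw [integral_Ioi_rpow_of_lt hb hy]
    rw [div_neg, neg_div]
  · filter_upwards [ae_restrict_mem measurableSet_Ioi] with x hx
    exact Real.rpow_nonneg (hy.trans hx).le b

lemma tonelli_step (h c : ℝ → ℝ≥0∞) (hh : Measurable h) (hc : Measurable c)
    (hhfin : ∀ y, h y ≠ ⊤) (hcfin : ∀ x, c x ≠ ⊤) :
    ∫⁻ x in Set.Ioi (0:ℝ), c x * ∫⁻ y in Set.Ioc (0:ℝ) x, h y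
      = ∫⁻ y in Set.Ioi (0:ℝ), h y * ∫⁻ x in Set.Ioi y, c x := by
  have hS : MeasurableSet {q : ℝ × ℝ | 0 < q.2 ∧ q.2 ≤ q.1} := by
    apply MeasurableSet.inter
    · exact measurableSet_lt measurable_const measurable_snd
    · exact measurableSet_le measurable_snd measurable_fst
  set F : ℝ × ℝ → ℝ≥0∞ := fun q =>
    Set.indicator {q : ℝ × ℝ | 0 < q.2 ∧ q.2 ≤ q.1} (fun q => c q.1 * h q.2) q with hF
  have hFmeas : Measurable F :=
    ((hc.comp measurable_fst).mul (hh.comp measurable_snd)).indicator hS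
  calc ∫⁻ x in Set.Ioi (0:ℝ), c x * ∫⁻ y in Set.Ioc (0:ℝ) x, h y
      = ∫⁻ x in Set.Ioi (0:ℝ), ∫⁻ y, F (x, y) := by
        refine lintegral_congr fun x => ?_
        rw [← lintegral_const_mul' _ _ (hcfin x),
          ← lintegral_indicator measurableSet_Ioc]
        refine lintegral_congr fun y => ?_
        simp only [F, Set.indicator_apply, Set.mem_Ioc, Set.mem_setOf_eq]
    _ = ∫⁻ y, ∫⁻ x in Set.Ioi (0:ℝ), F (x, y) := by
        exact lintegral_lintegral_swap (hFmeas.aemeasurable)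
    _ = ∫⁻ y, Set.indicator (Set.Ioi (0:ℝ))
          (fun y => h y * ∫⁻ x in Set.Ioi y, c x) y := by
        refine lintegral_congr fun y => ?_
        by_cases hy : (0:ℝ) < y
        · rw [Set.indicator_of_mem (Set.mem_Ioi.2 hy)]
          have h1 : ∀ x : ℝ, F (x, y) = Set.indicator (Set.Ici y) (fun x => c x * h y) x := by
            intro x
            simp [F, Set.indicator_apply, Set.mem_Ici, Set.mem_setOf_eq, hy]
          simp_rw [h1]
          have hsub : Set.Ici y ∩ Set.Ioi 0 = Set.Ici y := by
            rw [Set.inter_eq_left]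
            exact fun x hx => lt_of_lt_of_le hy hx
          rw [lintegral_indicator measurableSet_Ici,
            Measure.restrict_restrict measurableSet_Ici, hsub,
            setLIntegral_congr (Ioi_ae_eq_Ici (a := y)).symm,
            lintegral_mul_const' _ _ (hhfin y), mul_comm]
        · rw [Set.indicator_of_notMem (fun hmem => hy (Set.mem_Ioi.1 hmem))]
          have : ∀ x ∈ Set.Ioi (0:ℝ), F (x, y) = 0 := by
            intro x _
            exact Set.indicator_of_notMem (fun hmem => hy hmem.1) _
          rw [setLIntegral_congr_fun_ae measurableSet_Ioi (ae_of_all _ this)]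
          simp
    _ = ∫⁻ y in Set.Ioi (0:ℝ), h y * ∫⁻ x in Set.Ioi y, c x := by
        rw [lintegral_indicator measurableSet_Ioi]

/-- Hardy's inequality on the half line with power weight `x^{-r-1}`. -/
theorem stmt1 (p r : ℝ) (hp : 1 < p) (hr : 0 < r)
    (f : ℝ → ℝ) (hmeas : Measurable f) (hpos : ∀ y, 0 ≤ f y) :
    (∫⁻ x in Set.Ioi (0 : ℝ),
        (∫⁻ y in Set.Ioc (0 : ℝ) x, ENNReal.ofReal (f y)) ^ p
          * ENNReal.ofReal (x ^ (-r - 1))) ^ (1 / p)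
      ≤ ENNReal.ofReal (p / r) *
        (∫⁻ y in Set.Ioi (0 : ℝ),
            (ENNReal.ofReal (y * f y)) ^ p * ENNReal.ofReal (y ^ (-r - 1))) ^ (1 / p) := by
  have hp0 : 0 < p := lt_trans one_pos hp
  set q : ℝ := p / (p - 1) with hqdef
  have hpq : p.HolderConjugate q := (Real.holderConjugate_iff_eq_conjExponent hp).2 rfl
  have hq0 : 0 < q := hpq.symm.pos
  have hpq' : p / q = p - 1 := by
    rw [hqdef]; field_simp
  set s : ℝ := r / p with hsdef
  have hs : 0 < s := div_pos hr hp0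
  have hsp : s * p = r := by rw [hsdef]; field_simp
  set h : ℝ → ℝ≥0∞ := fun y => ENNReal.ofReal (f y ^ p * y ^ ((1 - s) * (p - 1))) with hhdef
  have hhmeas : Measurable h := by fun_prop
  set A : ℝ → ℝ≥0∞ := fun x => ∫⁻ y in Set.Ioc (0:ℝ) x, h y with hAdef
  -- pointwise Hölder bound
  have key : ∀ x ∈ Set.Ioi (0:ℝ),
      (∫⁻ y in Set.Ioc (0 : ℝ) x, ENNReal.ofReal (f y)) ^ p * ENNReal.ofReal (x ^ (-r - 1))
        ≤ ENNReal.ofReal (s ^ (1 - p)) * (ENNReal.ofReal (x ^ (-s - 1)) * A x) := by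
    intro x hx
    rw [Set.mem_Ioi] at hx
    have hsplit : (∫⁻ y in Set.Ioc (0 : ℝ) x, ENNReal.ofReal (f y))
        = ∫⁻ y in Set.Ioc (0 : ℝ) x,
            ((fun y => ENNReal.ofReal (f y * y ^ ((1 - s)/q))) *
              (fun y => ENNReal.ofReal (y ^ ((s - 1)/q)))) y := by
      refine setLIntegral_congr_fun_ae measurableSet_Ioc (ae_of_all _ fun y hy => ?_) |>.symm
      simp only [Pi.mul_apply]
      rw [← ENNReal.ofReal_mul (mul_nonneg (hpos y) (Real.rpow_nonneg hy.1.le _)),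
        mul_assoc, ← Real.rpow_add hy.1,
        (by ring : (1 - s)/q + (s - 1)/q = 0), Real.rpow_zero, mul_one]
    have hold := ENNReal.lintegral_mul_le_Lp_mul_Lq (volume.restrict (Set.Ioc (0:ℝ) x)) hpq
      (by fun_prop : Measurable fun y => ENNReal.ofReal (f y * y ^ ((1 - s)/q))).aemeasurable
      (by fun_prop : Measurable fun y => ENNReal.ofReal (y ^ ((s - 1)/q))).aemeasurable
    rw [← hsplit] at hold
    have hfac1 : (∫⁻ y in Set.Ioc (0:ℝ) x, ENNReal.ofReal (f y * y ^ ((1 - s)/q)) ^ p) = A x := by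
      refine setLIntegral_congr_fun_ae measurableSet_Ioc (ae_of_all _ fun y hy => ?_)
      rw [ENNReal.ofReal_rpow_of_nonneg (mul_nonneg (hpos y) (Real.rpow_nonneg hy.1.le _)) hp0.le,
        Real.mul_rpow (hpos y) (Real.rpow_nonneg hy.1.le _), ← Real.rpow_mul hy.1.le,
        (by rw [div_mul_eq_mul_div, mul_div_assoc, hpq'] : (1 - s)/q * p = (1 - s) * (p - 1))]
    have hfac2 : (∫⁻ y in Set.Ioc (0:ℝ) x, ENNReal.ofReal (y ^ ((s - 1)/q)) ^ q)
        = ENNReal.ofReal (x ^ s / s) := by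
      have e : (∫⁻ y in Set.Ioc (0:ℝ) x, ENNReal.ofReal (y ^ ((s - 1)/q)) ^ q)
          = ∫⁻ y in Set.Ioc (0:ℝ) x, ENNReal.ofReal (y ^ (s - 1)) := by
        refine setLIntegral_congr_fun_ae measurableSet_Ioc (ae_of_all _ fun y hy => ?_)
        rw [ENNReal.ofReal_rpow_of_nonneg (Real.rpow_nonneg hy.1.le _) hq0.le,
          ← Real.rpow_mul hy.1.le, div_mul_cancel₀ _ hq0.ne']
      rw [e, lintA (by linarith) hx, sub_add_cancel]
    rw [hfac1, hfac2] at hold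
    refine le_trans (mul_le_mul_of_nonneg_right (ENNReal.rpow_le_rpow hold hp0.le) (zero_le)) (le_of_eq ?_)
    rw [ENNReal.mul_rpow_of_nonneg _ _ hp0.le, ← ENNReal.rpow_mul, ← ENNReal.rpow_mul,
      one_div_mul_cancel hp0.ne', ENNReal.rpow_one,
      (by rw [div_mul_eq_mul_div, one_mul, hpq'] : 1/q * p = p - 1),
      ENNReal.ofReal_rpow_of_nonneg (div_nonneg (Real.rpow_nonneg hx.le _) hs.le) (by linarith),
      Real.div_rpow (Real.rpow_nonneg hx.le _) hs.le,
      ← Real.rpow_mul hx.le, div_eq_mul_inv, ← Real.rpow_neg hs.le, neg_sub,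
      ENNReal.ofReal_mul (Real.rpow_nonneg hx.le _)]
    have e2 : ENNReal.ofReal (x ^ (s*(p-1))) * ENNReal.ofReal (x ^ (-r-1))
        = ENNReal.ofReal (x ^ (-s-1)) := by
      rw [← ENNReal.ofReal_mul (Real.rpow_nonneg hx.le _), ← Real.rpow_add hx,
        (show s*(p-1) + (-r-1) = -s-1 by linear_combination hsp)]
    calc A x * (ENNReal.ofReal (x ^ (s*(p-1))) * ENNReal.ofReal (s ^ (1-p)))
          * ENNReal.ofReal (x ^ (-r - 1))
        = ENNReal.ofReal (s ^ (1-p)) *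
            ((ENNReal.ofReal (x ^ (s*(p-1))) * ENNReal.ofReal (x ^ (-r-1))) * A x) := by
          rw [(show x ^ (-r - 1) = x ^ (-r-1) by norm_num)]; ring
      _ = ENNReal.ofReal (s ^ (1 - p)) * (ENNReal.ofReal (x ^ (-s - 1)) * A x) := by
          rw [e2]
  -- integrate the pointwise bound and use Tonelli
  have hc : Measurable fun x : ℝ => ENNReal.ofReal (x ^ (-s - 1)) := by fun_prop
  have step1 : (∫⁻ x in Set.Ioi (0:ℝ),
        (∫⁻ y in Set.Ioc (0 : ℝ) x, ENNReal.ofReal (f y)) ^ p * ENNReal.ofReal (x ^ (-r - 1)))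
      ≤ ENNReal.ofReal (s ^ (1-p)) *
          ∫⁻ x in Set.Ioi (0:ℝ), ENNReal.ofReal (x ^ (-s - 1)) * A x := by
    refine le_trans (setLIntegral_mono' measurableSet_Ioi key) ?_
    rw [lintegral_const_mul' _ _ ENNReal.ofReal_ne_top]
  have step2 : (∫⁻ x in Set.Ioi (0:ℝ), ENNReal.ofReal (x ^ (-s - 1)) * A x)
      = ∫⁻ y in Set.Ioi (0:ℝ), h y * ∫⁻ x in Set.Ioi y, ENNReal.ofReal (x ^ (-s - 1)) :=
    tonelli_step h _ hhmeas hc (fun _ => ENNReal.ofReal_ne_top) (fun _ => ENNReal.ofReal_ne_top)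
  have step3 : (∫⁻ y in Set.Ioi (0:ℝ), h y * ∫⁻ x in Set.Ioi y, ENNReal.ofReal (x ^ (-s - 1)))
      = ENNReal.ofReal s⁻¹ *
          ∫⁻ y in Set.Ioi (0:ℝ),
            (ENNReal.ofReal (y * f y)) ^ p * ENNReal.ofReal (y ^ (-r - 1)) := by
    rw [← lintegral_const_mul' _ _ ENNReal.ofReal_ne_top]
    refine setLIntegral_congr_fun_ae measurableSet_Ioi (ae_of_all _ fun y hy => ?_)
    rw [Set.mem_Ioi] at hy
    have hB : (∫⁻ x in Set.Ioi y, ENNReal.ofReal (x ^ (-s - 1)))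
        = ENNReal.ofReal (y ^ (-s) / s) := by
      have := lintB (b := -s-1) (by linarith) hy
      rw [(show -s-1+1 = -s by ring), neg_neg] at this
      rw [(show -s - 1 = -s-1 by norm_num), this]
    rw [hB]
    have e2 : y ^ ((1-s)*(p-1)) * y ^ (-s) = y ^ p * y ^ (-r-1) := by
      rw [← Real.rpow_add hy, ← Real.rpow_add hy]
      congr 1
      linear_combination -hsp
    calc h y * ENNReal.ofReal (y ^ (-s) / s)
        = ENNReal.ofReal ((f y ^ p * y ^ ((1-s)*(p-1))) * (y ^ (-s) / s)) := by
          rw [hhdef, ← ENNReal.ofReal_mul (mul_nonneg (Real.rpow_nonneg (hpos y) p) (Real.rpow_nonneg hy.le _))]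
      _ = ENNReal.ofReal (s⁻¹ * ((y * f y) ^ p * y ^ (-r-1))) := by
          congr 1
          rw [Real.mul_rpow hy.le (hpos y), div_eq_mul_inv]
          linear_combination (f y ^ p * s⁻¹) * e2
      _ = ENNReal.ofReal s⁻¹ *
            ((ENNReal.ofReal (y * f y)) ^ p * ENNReal.ofReal (y ^ (-r - 1))) := by
          rw [ENNReal.ofReal_mul (inv_nonneg.2 hs.le),
            ENNReal.ofReal_mul (Real.rpow_nonneg (mul_nonneg hy.le (hpos y)) p),
            ENNReal.ofReal_rpow_of_nonneg (mul_nonneg hy.le (hpos y)) hp0.le,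
            (show -r-1 = -r - 1 by norm_num)]
  have hconst : ENNReal.ofReal (s ^ (1-p)) * ENNReal.ofReal s⁻¹
      = ENNReal.ofReal ((p/r) ^ p) := by
    rw [← ENNReal.ofReal_mul (Real.rpow_nonneg hs.le _)]
    congr 1
    rw [← Real.rpow_neg_one s, ← Real.rpow_add hs, (show 1 - p + -1 = -p by ring),
      Real.rpow_neg hs.le, ← Real.inv_rpow hs.le]
    congr 1
    rw [hsdef, inv_div]
  refine le_trans (ENNReal.rpow_le_rpow (step1.trans_eq (by rw [step2, step3])) (by positivity)) ?_
  rw [← mul_assoc, hconst, ENNReal.mul_rpow_of_nonneg _ _ (by positivity)]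
  have : ENNReal.ofReal ((p/r) ^ p) ^ (1/p) = ENNReal.ofReal (p/r) := by
    rw [ENNReal.ofReal_rpow_of_nonneg (by positivity) (by positivity),
      ← Real.rpow_mul (by positivity), mul_one_div, div_self hp0.ne', Real.rpow_one]
  rw [this]
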